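/- Let ω₀ belong to the set of points with dense orbit of a continuous flow on a compact metric space Ω, and consider the family x' = 𝔥(ω·t, x) + γ for a continuous 𝔥: Ω × ℝ → ℝ, locally Lipschitz in x. If for some γ the equation corresponding to ω₀ has two uniformly separated bounded solutions (with separation constant d > 0), then for every ω in the closure of the orbit of ω₀ (hence every ω ∈ Ω) the corresponding equation x' = 𝔥(ω·t,x) + γ has two bounded solutions separated by at least d. -/

import Mathlib

open Filter Topology MeasureTheory

/-- A solution with continuous derivative bound `L` is `L`-Lipschitz. -/
private lemma sol_lipschitz {g x : ℝ → ℝ} (hx : ∀ t, HasDerivAt x (g t) t)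
    (hgc : Continuous g) {L : ℝ} (hg : ∀ t, |g t| ≤ L) :
    ∀ a b : ℝ, |x a - x b| ≤ L * |a - b| := by
  intro a b
  have hint : x a - x b = ∫ u in b..a, g u :=
    (intervalIntegral.integral_eq_sub_of_hasDerivAt (fun u _ => hx u)
      (hgc.intervalIntegrable _ _)).symm
  rw [hint]
  have := intervalIntegral.norm_integral_le_of_norm_le_const (C := L) (a := b) (b := a)
    (f := g) (fun u _ => by simpa [Real.norm_eq_abs] using hg u)
  simpa [Real.norm_eq_abs, abs_sub_comm] using this

/-- Integral representation of translated solutions. -/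
private lemma translate_integral {g x : ℝ → ℝ} (hx : ∀ t, HasDerivAt x (g t) t)
    (hgc : Continuous g) (c t : ℝ) :
    x (t + c) - x c = ∫ u in (0:ℝ)..t, g (u + c) := by
  have hderiv : ∀ u : ℝ, HasDerivAt (fun v => x (v + c)) (g (u + c)) u :=
    fun u => HasDerivAt.comp_add_const u c (hx (u + c))
  have := intervalIntegral.integral_eq_sub_of_hasDerivAt
    (f := fun v => x (v + c)) (f' := fun u => g (u + c)) (a := 0) (b := t)
    (fun u _ => hderiv u)
    ((hgc.comp (continuous_id.add continuous_const)).intervalIntegrable 0 t)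
  have h2 := this.symm
  simp only [zero_add] at h2
  exact h2

/-- Existence of pointwise limits of translates, given convergence at rational times. -/
private lemma exists_limit (x : ℝ → ℝ) (L : ℝ) (hL0 : 0 ≤ L)
    (hlip : ∀ a b : ℝ, |x a - x b| ≤ L * |a - b|) (s : ℕ → ℝ)
    (hconv : ∀ q : ℚ, ∃ c, Tendsto (fun k => x (q + s k)) atTop (𝓝 c)) :
    ∃ y : ℝ → ℝ, ∀ t, Tendsto (fun k => x (t + s k)) atTop (𝓝 (y t)) := by
  have key : ∀ t : ℝ, ∃ c, Tendsto (fun k => x (t + s k)) atTop (𝓝 c) := by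
    intro t
    have hc : CauchySeq fun k => x (t + s k) := by
      rw [Metric.cauchySeq_iff]
      intro ε hε
      obtain ⟨q, hq⟩ := exists_rat_near t (show (0:ℝ) < ε/4/(L+1) by positivity)
      obtain ⟨c, hcq⟩ := hconv q
      obtain ⟨N, hN⟩ := Metric.cauchySeq_iff.1 hcq.cauchySeq (ε/4) (by positivity)
      refine ⟨N, fun m hm n hn => ?_⟩
      have h1 : ∀ k, |x (t + s k) - x (q + s k)| ≤ ε/4 := by
        intro k
        calc |x (t + s k) - x (q + s k)| ≤ L * |t + s k - (q + s k)| := hlip _ _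
          _ = L * |t - q| := by ring_nf
          _ ≤ (L+1) * (ε/4/(L+1)) := by
              apply mul_le_mul (by linarith) hq.le (abs_nonneg _) (by positivity)
          _ = ε/4 := by field_simp
      have hmn := hN m hm n hn
      rw [Real.dist_eq] at hmn ⊢
      have t1 : |x (t + s m) - x (t + s n)| ≤
          |x (t + s m) - x (q + s m)| + |x (q + s m) - x (q + s n)| +
            |x (q + s n) - x (t + s n)| := by
        have := abs_sub_le (x (t + s m)) (x (q + s m)) (x (t + s n))
        have := abs_sub_le (x (q + s m)) (x (q + s n)) (x (t + s n))
        linarith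
      have h2 := h1 m
      have h3 := h1 n
      rw [abs_sub_comm] at h3
      linarith
    exact cauchySeq_tendsto_of_complete hc
  choose y hy using key
  exact ⟨y, hy⟩

/-- The pointwise limit of translated solutions solves the limit equation. -/
private lemma limit_is_solution {Ω : Type*} [MetricSpace Ω]
    (σ : ℝ → Ω → Ω) (hcont : Continuous fun p : ℝ × Ω => σ p.1 p.2)
    (hadd : ∀ s t ω, σ (s + t) ω = σ s (σ t ω))
    (H : Ω → ℝ → ℝ) (hHcont : Continuous fun p : Ω × ℝ => H p.1 p.2)
    (γ : ℝ) (ω₀ ω : Ω) (M L : ℝ) (hL0 : 0 ≤ L)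
    (hL : ∀ (ϖ : Ω) (v : ℝ), |v| ≤ M → |H ϖ v + γ| ≤ L)
    (x : ℝ → ℝ) (hx : ∀ t, HasDerivAt x (H (σ t ω₀) (x t) + γ) t)
    (hMx : ∀ t, |x t| ≤ M) (s : ℕ → ℝ)
    (hσs : Tendsto (fun k => σ (s k) ω₀) atTop (𝓝 ω))
    (y : ℝ → ℝ) (hy : ∀ t, Tendsto (fun k => x (t + s k)) atTop (𝓝 (y t))) :
    ∀ t, HasDerivAt y (H (σ t ω) (y t) + γ) t := by
  have hxc : Continuous x := by
    rw [continuous_iff_continuousAt]; exact fun t => (hx t).continuousAt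
  have hσω₀c : Continuous fun t : ℝ => σ t ω₀ :=
    hcont.comp (continuous_id.prodMk continuous_const)
  have hgc : Continuous fun t => H (σ t ω₀) (x t) + γ :=
    (hHcont.comp (hσω₀c.prodMk hxc)).add continuous_const
  -- y is Lipschitz hence continuous
  have hlipx : ∀ a b : ℝ, |x a - x b| ≤ L * |a - b| :=
    sol_lipschitz hx hgc (fun t => hL _ _ (hMx t))
  have hlipy : ∀ a b : ℝ, |y a - y b| ≤ L * |a - b| := by
    intro a b
    refine le_of_tendsto (((hy a).sub (hy b)).abs) (Eventually.of_forall fun k => ?_)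
    calc |x (a + s k) - x (b + s k)| ≤ L * |a + s k - (b + s k)| := hlipx _ _
      _ = L * |a - b| := by ring_nf
  have hyc : Continuous y := by
    refine (LipschitzWith.of_dist_le_mul (K := ⟨L, hL0⟩) fun a b => ?_).continuous
    rw [Real.dist_eq, Real.dist_eq]; exact hlipy a b
  have hyM : ∀ t, |y t| ≤ M := by
    intro t
    exact le_of_tendsto ((hy t).abs) (Eventually.of_forall fun k => hMx _)
  set f : ℝ → ℝ := fun u => H (σ u ω) (y u) + γ with hf
  have hσωc : Continuous fun t : ℝ => σ t ω :=
    hcont.comp (continuous_id.prodMk continuous_const)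
  have hfc : Continuous f := (hHcont.comp (hσωc.prodMk hyc)).add continuous_const
  -- integral representation of translates
  have hrep : ∀ (k : ℕ) (t : ℝ), x (t + s k) = x (s k) +
      ∫ u in (0:ℝ)..t, (H (σ u (σ (s k) ω₀)) (x (u + s k)) + γ) := by
    intro k t
    have h := translate_integral hx hgc (s k) t
    have heq : (fun u => H (σ (u + s k) ω₀) (x (u + s k)) + γ)
        = fun u => H (σ u (σ (s k) ω₀)) (x (u + s k)) + γ := by
      funext u; rw [hadd]
    rw [heq] at h
    linarith [h]
  -- dominated convergence
  have hint : ∀ t : ℝ, Tendsto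
      (fun k => ∫ u in (0:ℝ)..t, (H (σ u (σ (s k) ω₀)) (x (u + s k)) + γ)) atTop
      (𝓝 (∫ u in (0:ℝ)..t, f u)) := by
    intro t
    apply intervalIntegral.tendsto_integral_filter_of_dominated_convergence
      (bound := fun _ => L)
    · refine Eventually.of_forall fun k => Continuous.aestronglyMeasurable ?_
      exact (hHcont.comp
        ((hcont.comp (continuous_id.prodMk continuous_const)).prodMk
          (hxc.comp (continuous_id.add continuous_const)))).add continuous_const
    · refine Eventually.of_forall fun k => ae_of_all _ fun u _ => ?_
      simpa [Real.norm_eq_abs] using hL _ _ (hMx (u + s k))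
    · exact intervalIntegrable_const
    · refine ae_of_all _ fun u _ => ?_
      have hσu : Continuous fun ϖ : Ω => σ u ϖ :=
        hcont.comp (continuous_const.prodMk continuous_id)
      have h1 : Tendsto (fun k => σ u (σ (s k) ω₀)) atTop (𝓝 (σ u ω)) :=
        (hσu.continuousAt.tendsto).comp hσs
      have h2 : Tendsto (fun k => x (u + s k)) atTop (𝓝 (y u)) := hy u
      have h3 := (hHcont.continuousAt (x := (σ u ω, y u))).tendsto.comp (h1.prodMk_nhds h2)
      exact h3.add tendsto_const_nhds
  -- the limit satisfies the integral equation
  have hkey : ∀ t : ℝ, y t = y 0 + ∫ u in (0:ℝ)..t, f u := by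
    intro t
    have hL0' : Tendsto (fun k => x (s k)) atTop (𝓝 (y 0)) := by
      have := hy 0; simpa using this
    have hR : Tendsto (fun k => x (s k) +
        ∫ u in (0:ℝ)..t, (H (σ u (σ (s k) ω₀)) (x (u + s k)) + γ)) atTop
        (𝓝 (y 0 + ∫ u in (0:ℝ)..t, f u)) := hL0'.add (hint t)
    have hLhs : Tendsto (fun k => x (t + s k)) atTop (𝓝 (y t)) := hy t
    refine tendsto_nhds_unique hLhs ?_
    convert hR using 2 with k
    exact hrep k t
  intro t
  have hd : HasDerivAt (fun τ => ∫ u in (0:ℝ)..τ, f u) (f t) t :=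
    (hfc.integral_hasStrictDerivAt 0 t).hasDerivAt
  have hyd : y = fun τ => y 0 + ∫ u in (0:ℝ)..τ, f u := funext hkey
  have hgoal : HasDerivAt y (f t) t := by
    rw [hyd]; exact hd.const_add (y 0)
  exact hgoal

/-- propagation of uniform separation through the hull. In the
skewproduct setting, if the equation over a point `ω₀` with dense orbit has two
bounded solutions separated by `d > 0`, then for every `ω` in the (compact) base the
equation `x' = 𝔥(ω·t, x) + γ` has two bounded solutions separated by `d`. -/
theorem separation_propagates_through_hull
    {Ω : Type*} [MetricSpace Ω] [CompactSpace Ω]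
    (σ : ℝ → Ω → Ω)
    (hcont : Continuous fun p : ℝ × Ω => σ p.1 p.2)
    (hzero : ∀ ω, σ 0 ω = ω)
    (hadd : ∀ s t ω, σ (s + t) ω = σ s (σ t ω))
    (H : Ω → ℝ → ℝ)
    (hHcont : Continuous fun p : Ω × ℝ => H p.1 p.2)
    (hHlip : ∀ ω, LocallyLipschitz (H ω))
    (γ : ℝ)
    (ω₀ : Ω) (hdense : Dense (Set.range fun t : ℝ => σ t ω₀))
    (d : ℝ) (hd : 0 < d)
    (x₁ x₂ : ℝ → ℝ)
    (hx₁ : ∀ t, HasDerivAt x₁ (H (σ t ω₀) (x₁ t) + γ) t)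
    (hx₂ : ∀ t, HasDerivAt x₂ (H (σ t ω₀) (x₂ t) + γ) t)
    (hbdd : ∃ M, ∀ t, |x₁ t| ≤ M ∧ |x₂ t| ≤ M)
    (hsep : ∀ t, d ≤ x₂ t - x₁ t) :
    ∀ ω : Ω, ∃ y₁ y₂ : ℝ → ℝ,
      (∀ t, HasDerivAt y₁ (H (σ t ω) (y₁ t) + γ) t) ∧
      (∀ t, HasDerivAt y₂ (H (σ t ω) (y₂ t) + γ) t) ∧
      (∃ M, ∀ t, |y₁ t| ≤ M ∧ |y₂ t| ≤ M) ∧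
      (∀ t, d ≤ y₂ t - y₁ t) := by
  intro ω
  obtain ⟨M, hM⟩ := hbdd
  have hM0 : 0 ≤ M := le_trans (abs_nonneg _) (hM 0).1
  -- uniform bound on the vector field
  obtain ⟨C, hC⟩ : ∃ C, ∀ p ∈ ((Set.univ : Set Ω) ×ˢ Set.Icc (-M) M),
      ‖H p.1 p.2 + γ‖ ≤ C :=
    (isCompact_univ.prod isCompact_Icc).exists_bound_of_continuousOn
      ((hHcont.add continuous_const).continuousOn)
  set L : ℝ := max C 0 with hLdef
  have hL0 : 0 ≤ L := le_max_right _ _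
  have hL : ∀ (ϖ : Ω) (v : ℝ), |v| ≤ M → |H ϖ v + γ| ≤ L := by
    intro ϖ v hv
    have := hC (ϖ, v) ⟨trivial, abs_le.1 hv⟩
    rw [Real.norm_eq_abs] at this
    exact this.trans (le_max_left _ _)
  have hx₁c : Continuous x₁ := by
    rw [continuous_iff_continuousAt]; exact fun t => (hx₁ t).continuousAt
  have hx₂c : Continuous x₂ := by
    rw [continuous_iff_continuousAt]; exact fun t => (hx₂ t).continuousAt
  have hσω₀c : Continuous fun t : ℝ => σ t ω₀ :=
    hcont.comp (continuous_id.prodMk continuous_const)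
  have hg₁c : Continuous fun t => H (σ t ω₀) (x₁ t) + γ :=
    (hHcont.comp (hσω₀c.prodMk hx₁c)).add continuous_const
  have hg₂c : Continuous fun t => H (σ t ω₀) (x₂ t) + γ :=
    (hHcont.comp (hσω₀c.prodMk hx₂c)).add continuous_const
  have hlip₁ : ∀ a b : ℝ, |x₁ a - x₁ b| ≤ L * |a - b| :=
    sol_lipschitz hx₁ hg₁c (fun t => hL _ _ (hM t).1)
  have hlip₂ : ∀ a b : ℝ, |x₂ a - x₂ b| ≤ L * |a - b| :=
    sol_lipschitz hx₂ hg₂c (fun t => hL _ _ (hM t).2)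
  -- choose times approaching ω through the dense orbit
  have hseq : ∀ n : ℕ, ∃ t : ℝ, dist ω (σ t ω₀) < 1 / (n + 1) := by
    intro n
    obtain ⟨b, hb, hbd⟩ := Metric.mem_closure_iff.1 (hdense ω) (1 / (n + 1))
      (by positivity)
    obtain ⟨t, rfl⟩ := hb
    exact ⟨t, hbd⟩
  choose s hs using hseq
  have hσs : Tendsto (fun n => σ (s n) ω₀) atTop (𝓝 ω) := by
    rw [tendsto_iff_dist_tendsto_zero]
    refine squeeze_zero (fun n => dist_nonneg) (fun n => ?_)
      tendsto_one_div_add_atTop_nhds_zero_nat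
    rw [dist_comm]; exact (hs n).le
  -- extract a subsequence converging at all rational times
  have hmem₁ : ∀ (n : ℕ) (q : ℚ), x₁ ((q : ℝ) + s n) ∈ Set.Icc (-M) M :=
    fun n q => abs_le.1 (hM _).1
  have hmem₂ : ∀ (n : ℕ) (q : ℚ), x₂ ((q : ℝ) + s n) ∈ Set.Icc (-M) M :=
    fun n q => abs_le.1 (hM _).2
  let F : ℕ → ((ℚ → Set.Icc (-M:ℝ) M) × (ℚ → Set.Icc (-M:ℝ) M)) :=
    fun n => (fun q => ⟨x₁ ((q : ℝ) + s n), hmem₁ n q⟩,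
              fun q => ⟨x₂ ((q : ℝ) + s n), hmem₂ n q⟩)
  obtain ⟨p, φ, hφ, hconv⟩ := CompactSpace.tendsto_subseq F
  have hq1 : ∀ q : ℚ, Tendsto (fun k => x₁ ((q : ℝ) + s (φ k))) atTop (𝓝 (p.1 q : ℝ)) := by
    intro q
    have hc : Continuous fun z : ((ℚ → Set.Icc (-M:ℝ) M) × (ℚ → Set.Icc (-M:ℝ) M)) =>
        ((z.1 q : ℝ)) := continuous_subtype_val.comp ((continuous_apply q).comp continuous_fst)
    exact (hc.continuousAt.tendsto).comp hconv
  have hq2 : ∀ q : ℚ, Tendsto (fun k => x₂ ((q : ℝ) + s (φ k))) atTop (𝓝 (p.2 q : ℝ)) := by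
    intro q
    have hc : Continuous fun z : ((ℚ → Set.Icc (-M:ℝ) M) × (ℚ → Set.Icc (-M:ℝ) M)) =>
        ((z.2 q : ℝ)) := continuous_subtype_val.comp ((continuous_apply q).comp continuous_snd)
    exact (hc.continuousAt.tendsto).comp hconv
  set s' : ℕ → ℝ := fun k => s (φ k) with hs'
  have hσs' : Tendsto (fun k => σ (s' k) ω₀) atTop (𝓝 ω) :=
    hσs.comp hφ.tendsto_atTop
  obtain ⟨y₁, hy₁⟩ := exists_limit x₁ L hL0 hlip₁ s' (fun q => ⟨_, hq1 q⟩)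
  obtain ⟨y₂, hy₂⟩ := exists_limit x₂ L hL0 hlip₂ s' (fun q => ⟨_, hq2 q⟩)
  refine ⟨y₁, y₂, ?_, ?_, ⟨M, fun t => ⟨?_, ?_⟩⟩, fun t => ?_⟩
  · exact limit_is_solution σ hcont hadd H hHcont γ ω₀ ω M L hL0 hL x₁ hx₁
      (fun t => (hM t).1) s' hσs' y₁ hy₁
  · exact limit_is_solution σ hcont hadd H hHcont γ ω₀ ω M L hL0 hL x₂ hx₂
      (fun t => (hM t).2) s' hσs' y₂ hy₂
  · exact le_of_tendsto ((hy₁ t).abs) (Eventually.of_forall fun k => (hM _).1)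
  · exact le_of_tendsto ((hy₂ t).abs) (Eventually.of_forall fun k => (hM _).2)
  · exact ge_of_tendsto ((hy₂ t).sub (hy₁ t)) (Eventually.of_forall fun k => hsep _)
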